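/- Let k ≥ 1 be an integer. Then the alternating sum of Eulerian numbers Σ_{ℓ=0}^{k−1} (−1)^ℓ · ⟨k, ℓ⟩ equals 0 if k is even, and equals (−1)^{(k−1)/2} · E_k if k is odd. -/

import Mathlib

/-- The number of descents of a permutation `σ` of `{0, …, k-1}`: the number of indices
`z` with `z + 1 < k` and `σ z > σ (z+1)`. -/
noncomputable def descentCount {k : ℕ} (σ : Equiv.Perm (Fin k)) : ℕ :=
  Nat.card {z : ℕ // ∃ h : z + 1 < k, σ ⟨z + 1, h⟩ < σ ⟨z, Nat.lt_of_succ_lt h⟩}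

/-- The Eulerian number `⟨k, ℓ⟩`: the number of permutations of `{0, …, k-1}` with
exactly `ℓ` descents. -/
noncomputable def eulerianNum (k ℓ : ℕ) : ℕ :=
  Nat.card {σ : Equiv.Perm (Fin k) // descentCount σ = ℓ}

/-- The Euler zigzag number `E n`: the number of alternating permutations of
`{0, …, n-1}`, i.e. permutations `σ` with `σ 0 < σ 1 > σ 2 < σ 3 > ⋯`. -/
noncomputable def zigzagNum (n : ℕ) : ℕ :=
  Nat.card {σ : Equiv.Perm (Fin n) //
    ∀ z : ℕ, ∀ h : z + 1 < n,
      if z % 2 = 0 then σ ⟨z, Nat.lt_of_succ_lt h⟩ < σ ⟨z + 1, h⟩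
      else σ ⟨z + 1, h⟩ < σ ⟨z, Nat.lt_of_succ_lt h⟩}

namespace Stmt15
open Finset

variable {n : ℕ}

/-- The word of a permutation, 1-indexed with boundary value 0. -/
def W (σ : Equiv.Perm (Fin n)) (z : ℕ) : ℕ :=
  if h : 1 ≤ z ∧ z ≤ n then (σ ⟨z - 1, by omega⟩ : ℕ) + 1 else 0

lemma W_out (σ : Equiv.Perm (Fin n)) {z : ℕ} (h : ¬ (1 ≤ z ∧ z ≤ n)) : W σ z = 0 := by
  simp [W, h]

lemma W_zero (σ : Equiv.Perm (Fin n)) : W σ 0 = 0 := W_out σ (by omega)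

lemma W_eq (σ : Equiv.Perm (Fin n)) {z : ℕ} (h1 : 1 ≤ z) (h2 : z ≤ n) :
    W σ z = (σ ⟨z - 1, by omega⟩ : ℕ) + 1 := by
  simp [W, h1, h2]

lemma W_mem (σ : Equiv.Perm (Fin n)) {z : ℕ} (h1 : 1 ≤ z) (h2 : z ≤ n) :
    1 ≤ W σ z ∧ W σ z ≤ n := by
  rw [W_eq σ h1 h2]
  have := (σ ⟨z - 1, by omega⟩).isLt
  omega

lemma W_pos_iff (σ : Equiv.Perm (Fin n)) {z : ℕ} : 1 ≤ W σ z ↔ (1 ≤ z ∧ z ≤ n) := by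
  constructor
  · intro h; by_contra hc; rw [W_out σ hc] at h; omega
  · intro h; exact (W_mem σ h.1 h.2).1

lemma W_inj (σ : Equiv.Perm (Fin n)) {z w : ℕ} (hz1 : 1 ≤ z) (hz2 : z ≤ n)
    (hw1 : 1 ≤ w) (hw2 : w ≤ n) (h : W σ z = W σ w) : z = w := by
  rw [W_eq σ hz1 hz2, W_eq σ hw1 hw2] at h
  have h2 : σ ⟨z - 1, by omega⟩ = σ ⟨w - 1, by omega⟩ := Fin.ext (by omega)
  have := σ.injective h2
  have := Fin.mk.injEq (z-1) (by omega : z - 1 < n) (w-1) (by omega : w - 1 < n) ▸ this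
  omega

/-- position of value y -/
def posv (σ : Equiv.Perm (Fin n)) (y : ℕ) : ℕ :=
  if h : 1 ≤ y ∧ y ≤ n then (σ.symm ⟨y - 1, by omega⟩ : ℕ) + 1 else 0

lemma posv_mem (σ : Equiv.Perm (Fin n)) {y : ℕ} (h1 : 1 ≤ y) (h2 : y ≤ n) :
    1 ≤ posv σ y ∧ posv σ y ≤ n := by
  simp only [posv, dif_pos (And.intro h1 h2)]
  have := (σ.symm ⟨y - 1, by omega⟩).isLt
  omega

lemma W_posv (σ : Equiv.Perm (Fin n)) {y : ℕ} (h1 : 1 ≤ y) (h2 : y ≤ n) :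
    W σ (posv σ y) = y := by
  have hm := posv_mem σ h1 h2
  rw [W_eq σ hm.1 hm.2]
  simp only [posv, dif_pos (And.intro h1 h2)]
  simp only [Nat.add_sub_cancel]
  have : (⟨(σ.symm ⟨y - 1, by omega⟩ : ℕ), by omega⟩ : Fin n) = σ.symm ⟨y - 1, by omega⟩ :=
    Fin.ext rfl
  rw [this, Equiv.apply_symm_apply]
  simp only [Fin.val_mk]
  omega

lemma posv_eq (σ : Equiv.Perm (Fin n)) {y z : ℕ} (h1 : 1 ≤ z) (h2 : z ≤ n)
    (h : W σ z = y) : posv σ y = z := by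
  have hy : 1 ≤ y ∧ y ≤ n := h ▸ W_mem σ h1 h2
  have := W_posv σ hy.1 hy.2
  have hm := posv_mem σ hy.1 hy.2
  exact W_inj σ hm.1 hm.2 h1 h2 (by rw [this, h])

/-- cycle on positions (0-indexed) q..r : q↦q+1↦...↦r↦q ; here as the map sending
position i to the *source* position: forward f sends i to i+1 style.  We define
`cyc q r` as the permutation with `(cyc q r) i = i+1` for q ≤ i < r, `(cyc q r) r = q`,
identity elsewhere (also identity if r ≥ n or q > r). -/
def cyc (q r : ℕ) : Equiv.Perm (Fin n) where
  toFun i := ⟨if q ≤ i.1 ∧ i.1 ≤ r ∧ r < n then (if i.1 = r then q else i.1 + 1) else i.1,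
    by split_ifs <;> omega⟩
  invFun i := ⟨if q ≤ i.1 ∧ i.1 ≤ r ∧ r < n then (if i.1 = q then r else i.1 - 1) else i.1,
    by split_ifs <;> omega⟩
  left_inv := by
    intro i
    apply Fin.ext
    simp only
    split_ifs <;> omega
  right_inv := by
    intro i
    apply Fin.ext
    simp only
    split_ifs <;> omega

lemma cyc_apply (q r : ℕ) (i : Fin n) :
    ((cyc q r i : Fin n) : ℕ) =
      if q ≤ i.1 ∧ i.1 ≤ r ∧ r < n then (if i.1 = r then q else i.1 + 1) else i.1 := rfl

lemma cyc_symm_apply (q r : ℕ) (i : Fin n) :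
    (((cyc q r).symm i : Fin n) : ℕ) =
      if q ≤ i.1 ∧ i.1 ≤ r ∧ r < n then (if i.1 = q then r else i.1 - 1) else i.1 := rfl

/-- the "hop" of the value at 1-indexed position p to 1-indexed position t-1. -/
def hop (σ : Equiv.Perm (Fin n)) (p t : ℕ) : Equiv.Perm (Fin n) :=
  (cyc (p - 1) (t - 2) : Equiv.Perm (Fin n)).trans σ

/-- the inverse hop -/
def unhop (σ : Equiv.Perm (Fin n)) (p t : ℕ) : Equiv.Perm (Fin n) :=
  (cyc (p - 1) (t - 2) : Equiv.Perm (Fin n)).symm.trans σ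

lemma unhop_hop (σ : Equiv.Perm (Fin n)) (p t : ℕ) : unhop (hop σ p t) p t = σ := by
  ext i
  simp [unhop, hop]

lemma hop_unhop (σ : Equiv.Perm (Fin n)) (p t : ℕ) : hop (unhop σ p t) p t = σ := by
  ext i
  simp [unhop, hop]

lemma W_trans (σ : Equiv.Perm (Fin n)) (e : Equiv.Perm (Fin n)) {z : ℕ}
    (h1 : 1 ≤ z) (h2 : z ≤ n) :
    W (e.trans σ) z = W σ ((e ⟨z - 1, by omega⟩ : ℕ) + 1) := by
  have hi := (e ⟨z - 1, by omega⟩).isLt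
  rw [W_eq _ h1 h2, W_eq σ (by omega) (by omega)]
  simp only [Equiv.trans_apply, Nat.add_sub_cancel]

/-- configuration: value x sits at position p, is a double ascent, t is the landing site. -/
structure Cfg (σ : Equiv.Perm (Fin n)) (x p t : ℕ) : Prop where
  hp1 : 1 ≤ p
  hpn : p ≤ n
  hx : W σ p = x
  hl : W σ (p-1) < x
  hr : x < W σ (p+1)
  htp : p + 2 ≤ t
  htn : t ≤ n + 1
  htx : W σ t < x
  hmid : ∀ s, p < s → s < t → x < W σ s

section CfgLemmas
variable {σ : Equiv.Perm (Fin n)} {x p t : ℕ} (C : Cfg σ x p t)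

include C

lemma Cfg.hx1 : 1 ≤ x := C.hx ▸ (W_mem σ C.hp1 C.hpn).1
lemma Cfg.hxn : x ≤ n := C.hx ▸ (W_mem σ C.hp1 C.hpn).2
lemma Cfg.hpn1 : p + 1 ≤ n := by
  have := C.hr
  by_contra hc
  rw [W_out σ (by omega)] at this
  omega

/-- A1 : W of hop outside the interval -/
lemma Cfg.W_hop_out {z : ℕ} (hz : z < p ∨ t - 1 < z) : W (hop σ p t) z = W σ z := by
  by_cases h : 1 ≤ z ∧ z ≤ n
  · rw [hop, W_trans σ _ h.1 h.2, cyc_apply]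
    have htp := C.htp; have hp1 := C.hp1
    simp only [Fin.val_mk]
    rw [if_neg (by omega)]
    congr 1
    omega
  · rw [W_out _ h, W_out _ h]

/-- A2 : W of hop inside the shifted interval -/
lemma Cfg.W_hop_mid {z : ℕ} (hz1 : p ≤ z) (hz2 : z ≤ t - 2) :
    W (hop σ p t) z = W σ (z + 1) := by
  have htp := C.htp; have hp1 := C.hp1; have htn := C.htn; have hpn := C.hpn
  rw [hop, W_trans σ _ (by omega) (by omega), cyc_apply]
  simp only [Fin.val_mk]
  rw [if_pos (by omega), if_neg (by omega)]
  congr 1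
  omega

/-- A3 : W of hop at the landing site -/
lemma Cfg.W_hop_land : W (hop σ p t) (t - 1) = x := by
  have htp := C.htp; have hp1 := C.hp1; have htn := C.htn; have hpn := C.hpn
  rw [hop, W_trans σ _ (by omega) (by omega), cyc_apply]
  simp only [Fin.val_mk]
  rw [if_pos (by omega), if_pos (by omega)]
  have : p - 1 + 1 = p := by omega
  rw [this, C.hx]

end CfgLemmas

/-- descent indicator -/
def dterm (σ : Equiv.Perm (Fin n)) (z : ℕ) : ℕ := if W σ (z+1) < W σ z then 1 else 0

/-- descent count including the final boundary descent (so = descentCount + 1). -/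
def desSum (σ : Equiv.Perm (Fin n)) : ℕ := ∑ z ∈ Ioc 0 n, dterm σ z

lemma Cfg.desSum_hop {σ : Equiv.Perm (Fin n)} {x p t : ℕ} (C : Cfg σ x p t) :
    desSum (hop σ p t) = desSum σ + 1 := by
  obtain ⟨v, rfl⟩ : ∃ v, p = v + 1 := ⟨p - 1, by have := C.hp1; omega⟩
  obtain ⟨w, rfl⟩ : ∃ w, t = v + 3 + w := ⟨t - v - 3, by have := C.htp; omega⟩
  have hvn : v + 2 + w ≤ n := by have := C.htn; omega
  set τ := hop σ (v+1) (v+3+w) with hτ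
  have hsplit : ∀ ρ : Equiv.Perm (Fin n),
      desSum ρ = (∑ z ∈ Ioc 0 v, dterm ρ z) + (∑ z ∈ Ioc v (v+2+w), dterm ρ z)
        + (∑ z ∈ Ioc (v+2+w) n, dterm ρ z) := by
    intro ρ
    rw [desSum, ← Finset.sum_Ioc_consecutive _ (by omega : 0 ≤ v+2+w) hvn,
      ← Finset.sum_Ioc_consecutive _ (by omega : 0 ≤ v) (by omega : v ≤ v+2+w)]
  rw [hsplit, hsplit]
  have hL : (∑ z ∈ Ioc 0 v, dterm τ z) = ∑ z ∈ Ioc 0 v, dterm σ z := by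
    apply Finset.sum_congr rfl
    intro z hz
    rw [Finset.mem_Ioc] at hz
    rcases Nat.lt_or_ge z v with h | h
    · unfold dterm
      rw [hτ, C.W_hop_out (z := z + 1) (by omega), C.W_hop_out (z := z) (by omega)]
    · have hzv : z = v := by omega
      rw [hzv]
      unfold dterm
      rw [hτ, C.W_hop_out (z := v) (by omega), C.W_hop_mid (z := v + 1) (by omega) (by omega)]
      have h1 := C.hl; have h2 := C.hr; have h3 := C.hx
      have e1 : v + 1 - 1 = v := by omega
      rw [e1] at h1
      rw [if_neg (by omega), if_neg (by rw [h3]; omega)]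
  have hR : (∑ z ∈ Ioc (v+2+w) n, dterm τ z) = ∑ z ∈ Ioc (v+2+w) n, dterm σ z := by
    apply Finset.sum_congr rfl
    intro z hz
    rw [Finset.mem_Ioc] at hz
    unfold dterm
    rw [hτ, C.W_hop_out (z := z + 1) (by omega), C.W_hop_out (z := z) (by omega)]
  have hM : (∑ z ∈ Ioc v (v+2+w), dterm τ z)
      = (∑ z ∈ Ioc v (v+2+w), dterm σ z) + 1 := by
    have e2 : v + 2 + w = (v + 1 + w) + 1 := by omega
    have e3 : v + 1 + w = (v + w) + 1 := by omega
    -- new side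
    have hnewsplit : (∑ z ∈ Ioc v (v+2+w), dterm τ z)
        = (∑ z ∈ Ioc v (v+w), dterm τ z) + dterm τ (v+w+1) + dterm τ (v+1+w+1) := by
      rw [e2, Finset.sum_Ioc_succ_top (by omega), e3, Finset.sum_Ioc_succ_top (by omega)]
    have holdsplit : (∑ z ∈ Ioc v (v+2+w), dterm σ z)
        = dterm σ (v+1) + (∑ z ∈ Ioc (v+1) (v+1+w), dterm σ z) + dterm σ (v+1+w+1) := by
      rw [e2, Finset.sum_Ioc_succ_top (by omega)]
      congr 1
      rw [← Finset.sum_Ioc_consecutive _ (by omega : v ≤ v + 1) (by omega : v + 1 ≤ v + 1 + w)]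
      congr 1
      have : Ioc v (v+1) = {v+1} := by
        ext a
        simp only [Finset.mem_Ioc, Finset.mem_singleton]
        omega
      rw [this, Finset.sum_singleton]
    have hnew1 : dterm τ (v + w + 1) = 1 := by
      unfold dterm
      have e4 : v + w + 1 + 1 = v + 3 + w - 1 := by omega
      rw [hτ, e4, C.W_hop_land, C.W_hop_mid (z := v + w + 1) (by omega) (by omega)]
      rw [if_pos (C.hmid (v + w + 1 + 1) (by omega) (by omega))]
    have hnew2 : dterm τ (v + 1 + w + 1) = 1 := by
      unfold dterm
      have e4 : v + 1 + w + 1 = v + 3 + w - 1 := by omega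
      rw [hτ, e4, C.W_hop_land, C.W_hop_out (z := v + 3 + w - 1 + 1) (by omega)]
      have e5 : v + 3 + w - 1 + 1 = v + 3 + w := by omega
      rw [e5, if_pos C.htx]
    have hold1 : dterm σ (v + 1 + w + 1) = 1 := by
      unfold dterm
      have h1 := C.htx
      have h2 := C.hmid (v + 2 + w) (by omega) (by omega)
      have e4 : v + 1 + w + 1 + 1 = v + 3 + w := by omega
      have e5 : v + 1 + w + 1 = v + 2 + w := by omega
      rw [e4, e5, if_pos (by omega)]
    have hold0 : dterm σ (v+1) = 0 := by
      unfold dterm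
      have h1 := C.hr
      have h2 := C.hx
      rw [if_neg (by omega)]
    have hmids : (∑ z ∈ Ioc v (v+w), dterm τ z) = ∑ z ∈ Ioc (v+1) (v+1+w), dterm σ z := by
      rw [show (∑ z ∈ Ioc (v+1) (v+1+w), dterm σ z) = ∑ z ∈ Ioc v (v+w), dterm σ (z+1) by
        apply Finset.sum_nbij' (fun z => z - 1) (fun z => z + 1) <;>
          (intro a ha; rw [Finset.mem_Ioc] at ha; try rw [Finset.mem_Ioc]) <;>
          first
            | omega
            | (congr 1; omega)]
      apply Finset.sum_congr rfl
      intro z hz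
      rw [Finset.mem_Ioc] at hz
      unfold dterm
      rw [hτ, C.W_hop_mid (z := z + 1) (by omega) (by omega),
        C.W_hop_mid (z := z) (by omega) (by omega)]
    rw [hnewsplit, holdsplit, hnew1, hnew2, hold0, hold1, hmids]
    omega
  rw [hL, hR, hM]
  omega

/-- y is a double ascent (as a value) -/
def DAv (σ : Equiv.Perm (Fin n)) (y : ℕ) : Prop :=
  W σ (posv σ y - 1) < y ∧ y < W σ (posv σ y + 1)

/-- y is a double descent (as a value) -/
def DDv (σ : Equiv.Perm (Fin n)) (y : ℕ) : Prop :=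
  W σ (posv σ y + 1) < y ∧ y < W σ (posv σ y - 1)

open scoped Classical in
/-- the set of values that are double ascents or double descents -/
noncomputable def Bv (σ : Equiv.Perm (Fin n)) : Finset ℕ :=
  (Icc 1 n).filter (fun y => DAv σ y ∨ DDv σ y)

lemma status_ext {σ τ : Equiv.Perm (Fin n)} {y sσ sτ : ℕ}
    (hsσ : posv σ y = sσ) (hsτ : posv τ y = sτ)
    (hl1 : W τ (sτ-1) < y ↔ W σ (sσ-1) < y) (hl2 : y < W τ (sτ-1) ↔ y < W σ (sσ-1))
    (hr1 : W τ (sτ+1) < y ↔ W σ (sσ+1) < y) (hr2 : y < W τ (sτ+1) ↔ y < W σ (sσ+1)) :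
    (DAv τ y ↔ DAv σ y) ∧ (DDv τ y ↔ DDv σ y) := by
  unfold DAv DDv
  rw [hsσ, hsτ]
  constructor
  · exact and_congr hl1 hr2
  · exact and_congr hr1 hl2

lemma Cfg.posv_hop_x {σ : Equiv.Perm (Fin n)} {x p t : ℕ} (C : Cfg σ x p t) :
    posv (hop σ p t) x = t - 1 := by
  have := C.htp; have := C.htn; have := C.hpn
  exact posv_eq _ (by omega) (by omega) C.W_hop_land

lemma Cfg.DDv_hop_x {σ : Equiv.Perm (Fin n)} {x p t : ℕ} (C : Cfg σ x p t) :
    DDv (hop σ p t) x := by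
  have htp := C.htp; have htn := C.htn; have hpn := C.hpn
  unfold DDv
  rw [C.posv_hop_x]
  constructor
  · have e : t - 1 + 1 = t := by omega
    rw [e, C.W_hop_out (by omega)]
    exact C.htx
  · have e : t - 1 - 1 = t - 2 := by omega
    rw [e, C.W_hop_mid (by omega) (by omega)]
    have e2 : t - 2 + 1 = t - 1 := by omega
    rw [e2]
    exact C.hmid (t-1) (by omega) (by omega)

lemma Cfg.status_hop {σ : Equiv.Perm (Fin n)} {x p t : ℕ} (C : Cfg σ x p t)
    {y : ℕ} (h1 : 1 ≤ y) (h2 : y ≤ n) (hyx : y ≠ x) :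
    (DAv (hop σ p t) y ↔ DAv σ y) ∧ (DDv (hop σ p t) y ↔ DDv σ y) := by
  have htp := C.htp; have htn := C.htn; have hpn := C.hpn; have hp1 := C.hp1
  set s := posv σ y with hs
  have hsm : 1 ≤ s ∧ s ≤ n := posv_mem σ h1 h2
  have hWs : W σ s = y := W_posv σ h1 h2
  have hsp : s ≠ p := fun h => hyx (by rw [← hWs, h, C.hx])
  set τ := hop σ p t with hτdef
  rcases Nat.lt_or_ge s p with hcase | hcase
  · -- s < p : position unchanged
    have hs' : posv τ y = s := posv_eq _ hsm.1 hsm.2 (by rw [hτdef, C.W_hop_out (Or.inl hcase), hWs])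
    rcases Nat.lt_or_ge s (p-1) with hc2 | hc2
    · -- s ≤ p - 2 : neighbors unchanged
      have el : W τ (s-1) = W σ (s-1) := C.W_hop_out (by omega)
      have er : W τ (s+1) = W σ (s+1) := C.W_hop_out (by omega)
      exact status_ext hs.symm hs' (by rw [el]) (by rw [el]) (by rw [er]) (by rw [er])
    · -- s = p - 1
      have hc3 : s = p - 1 := by omega
      have el : W τ (s-1) = W σ (s-1) := C.W_hop_out (by omega)
      have er : W τ (s+1) = W σ (p+1) := by
        rw [hτdef, show s + 1 = p from by omega]
        exact C.W_hop_mid (le_refl p) (by omega)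
      have hyltx : y < x := by rw [← hWs, hc3]; exact C.hl
      have hylt : y < W σ (p+1) := lt_trans hyltx C.hr
      have exx : W σ (s + 1) = x := by rw [show s + 1 = p from by omega, C.hx]
      refine status_ext hs.symm hs' (by rw [el]) (by rw [el]) ?_ ?_
      · rw [er, exx]
        constructor <;> intro h <;> omega
      · rw [er, exx]
        constructor <;> intro h <;> omega
  · rcases Nat.lt_or_ge (t-1) s with hcase2 | hcase2
    · rcases Nat.lt_or_ge t s with hc2 | hc2
      · -- s > t : all unchanged
        have hs' : posv τ y = s := posv_eq _ hsm.1 hsm.2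
          (by rw [hτdef, C.W_hop_out (Or.inr hcase2), hWs])
        have el : W τ (s-1) = W σ (s-1) := C.W_hop_out (by omega)
        have er : W τ (s+1) = W σ (s+1) := C.W_hop_out (by omega)
        exact status_ext hs.symm hs' (by rw [el]) (by rw [el]) (by rw [er]) (by rw [er])
      · -- s = t
        have hc3 : s = t := by omega
        have hs' : posv τ y = s := posv_eq _ hsm.1 hsm.2
          (by rw [hτdef, C.W_hop_out (Or.inr hcase2), hWs])
        have el : W τ (s-1) = x := by rw [hτdef, show s - 1 = t - 1 from by omega, C.W_hop_land]
        have er : W τ (s+1) = W σ (s+1) := C.W_hop_out (by omega)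
        have hylx : y < x := by rw [← hWs, hc3]; exact C.htx
        have hyl : y < W σ (s-1) := by
          rw [← hWs, hc3]
          exact lt_trans C.htx (C.hmid (t-1) (by omega) (by omega))
        refine status_ext hs.symm hs' ?_ ?_ (by rw [er]) (by rw [er])
        · rw [el]
          constructor <;> intro h <;> omega
        · rw [el]
          constructor <;> intro h <;> omega
    · -- p < s ≤ t - 1 : position shifts down by one
      have hps : p < s := by omega
      have hs' : posv τ y = s - 1 := by
        apply posv_eq _ (by omega) (by omega)
        rw [hτdef, C.W_hop_mid (by omega) (by omega), show s - 1 + 1 = s from by omega, hWs]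
      have hygtx : x < y := by rw [← hWs]; exact C.hmid s hps (by omega)
      -- left neighbor
      have hleft : (W τ (s-1-1) < y ↔ W σ (s-1) < y) ∧ (y < W τ (s-1-1) ↔ y < W σ (s-1)) := by
        rcases Nat.lt_or_ge (p+1) s with hc2 | hc2
        · -- s ≥ p + 2
          have el : W τ (s-1-1) = W σ (s-1) := by
            rw [hτdef, show s - 1 - 1 = s - 2 from by omega,
              C.W_hop_mid (by omega) (by omega), show s - 2 + 1 = s - 1 from by omega]
          rw [el]
          exact ⟨Iff.rfl, Iff.rfl⟩
        · -- s = p + 1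
          have hc3 : s = p + 1 := by omega
          have el : W τ (s-1-1) = W σ (p-1) := by
            rw [hτdef, show s - 1 - 1 = p - 1 from by omega]
            exact C.W_hop_out (by omega)
          have exx : W σ (s-1) = x := by rw [show s - 1 = p from by omega, C.hx]
          have h1' : W σ (p-1) < x := C.hl
          rw [el, exx]
          constructor
          · constructor <;> intro h <;> omega
          · constructor <;> intro h <;> omega
      -- right neighbor
      have hright : (W τ (s-1+1) < y ↔ W σ (s+1) < y) ∧ (y < W τ (s-1+1) ↔ y < W σ (s+1)) := by
        rcases Nat.lt_or_ge s (t-1) with hc2 | hc2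
        · -- s ≤ t - 2
          have er : W τ (s-1+1) = W σ (s+1) := by
            rw [hτdef, show s - 1 + 1 = s from by omega, C.W_hop_mid (by omega) (by omega)]
          rw [er]
          exact ⟨Iff.rfl, Iff.rfl⟩
        · -- s = t - 1
          have hc3 : s = t - 1 := by omega
          have er : W τ (s-1+1) = x := by
            rw [hτdef, show s - 1 + 1 = s from by omega, hc3, C.W_hop_land]
          have hWt : W σ (s+1) < x := by rw [hc3, show t - 1 + 1 = t from by omega]; exact C.htx
          rw [er]
          constructor
          · constructor <;> intro h <;> omega
          · constructor <;> intro h <;> omega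
      exact status_ext hs.symm hs' hleft.1 hleft.2 hright.1 hright.2

lemma mem_Bv {σ : Equiv.Perm (Fin n)} {y : ℕ} :
    y ∈ Bv σ ↔ (1 ≤ y ∧ y ≤ n) ∧ (DAv σ y ∨ DDv σ y) := by
  classical
  simp [Bv, Finset.mem_filter, Finset.mem_Icc]

lemma Cfg.posv_x {σ : Equiv.Perm (Fin n)} {x p t : ℕ} (C : Cfg σ x p t) : posv σ x = p :=
  posv_eq σ C.hp1 C.hpn C.hx

lemma Cfg.DAv_x {σ : Equiv.Perm (Fin n)} {x p t : ℕ} (C : Cfg σ x p t) : DAv σ x := by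
  unfold DAv
  rw [C.posv_x]
  exact ⟨C.hl, C.hr⟩

lemma Cfg.mem_Bv_x {σ : Equiv.Perm (Fin n)} {x p t : ℕ} (C : Cfg σ x p t) : x ∈ Bv σ :=
  mem_Bv.mpr ⟨⟨C.hx1, C.hxn⟩, Or.inl C.DAv_x⟩

lemma Cfg.mem_Bv_hop_x {σ : Equiv.Perm (Fin n)} {x p t : ℕ} (C : Cfg σ x p t) :
    x ∈ Bv (hop σ p t) :=
  mem_Bv.mpr ⟨⟨C.hx1, C.hxn⟩, Or.inr C.DDv_hop_x⟩

lemma Cfg.min_transfer {σ : Equiv.Perm (Fin n)} {x p t : ℕ} (C : Cfg σ x p t) :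
    (∀ y ∈ Bv σ, x ≤ y) ↔ (∀ y ∈ Bv (hop σ p t), x ≤ y) := by
  constructor
  · intro hmin y hy
    rcases eq_or_ne y x with rfl | hne
    · exact le_refl y
    · rw [mem_Bv] at hy
      obtain ⟨⟨hy1, hy2⟩, hst⟩ := hy
      have := C.status_hop hy1 hy2 hne
      exact hmin y (mem_Bv.mpr ⟨⟨hy1, hy2⟩, by tauto⟩)
  · intro hmin y hy
    rcases eq_or_ne y x with rfl | hne
    · exact le_refl y
    · rw [mem_Bv] at hy
      obtain ⟨⟨hy1, hy2⟩, hst⟩ := hy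
      have := C.status_hop hy1 hy2 hne
      exact hmin y (mem_Bv.mpr ⟨⟨hy1, hy2⟩, by tauto⟩)

/-- W of unhop -/
lemma W_unhop_out (σ : Equiv.Perm (Fin n)) {a b z : ℕ} (ha : 1 ≤ a) (hab : a + 2 ≤ b)
    (hz : z < a ∨ b - 1 < z) : W (unhop σ a b) z = W σ z := by
  by_cases h : 1 ≤ z ∧ z ≤ n
  · rw [unhop, W_trans σ _ h.1 h.2, cyc_symm_apply]
    simp only [Fin.val_mk]
    rw [if_neg (by omega)]
    congr 1
    omega
  · rw [W_out _ h, W_out _ h]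

lemma W_unhop_land (σ : Equiv.Perm (Fin n)) {a b : ℕ} (ha : 1 ≤ a) (hab : a + 2 ≤ b)
    (hbn : b ≤ n + 1) : W (unhop σ a b) a = W σ (b - 1) := by
  rw [unhop, W_trans σ _ (z := a) (by omega : 1 ≤ a) (by omega : a ≤ n), cyc_symm_apply]
  simp only [Fin.val_mk]
  rw [if_pos (by omega), if_pos (by trivial)]
  congr 1
  omega

lemma W_unhop_mid (σ : Equiv.Perm (Fin n)) {a b z : ℕ} (ha : 1 ≤ a) (hab : a + 2 ≤ b)
    (hbn : b ≤ n + 1) (hz1 : a + 1 ≤ z) (hz2 : z ≤ b - 1) :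
    W (unhop σ a b) z = W σ (z - 1) := by
  rw [unhop, W_trans σ _ (z := z) (by omega : 1 ≤ z) (by omega : z ≤ n), cyc_symm_apply]
  simp only [Fin.val_mk]
  rw [if_pos (by omega), if_neg (by omega)]
  congr 1
  omega

/-- the sign-reversing involution -/
noncomputable def phi (σ : Equiv.Perm (Fin n)) : Equiv.Perm (Fin n) :=
  if h : (Bv σ).Nonempty then
    if W σ (posv σ ((Bv σ).min' h) - 1) < (Bv σ).min' h then
      hop σ (posv σ ((Bv σ).min' h))
        (sInf {s | posv σ ((Bv σ).min' h) < s ∧ W σ s < (Bv σ).min' h})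
    else
      unhop σ ((sSup {s | s < posv σ ((Bv σ).min' h) ∧ W σ s < (Bv σ).min' h}) + 1)
        (posv σ ((Bv σ).min' h) + 1)
  else σ

lemma phi_spec {σ : Equiv.Perm (Fin n)} (h : (Bv σ).Nonempty) :
    (Bv (phi σ)).Nonempty ∧ phi (phi σ) = σ ∧
      (desSum (phi σ) = desSum σ + 1 ∨ desSum σ = desSum (phi σ) + 1) := by
  classical
  set x := (Bv σ).min' h with hxdef
  set p := posv σ x with hpdef
  have hxB : x ∈ Bv σ := Finset.min'_mem _ h
  have hmin : ∀ y ∈ Bv σ, x ≤ y := fun y hy => Finset.min'_le _ y hy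
  rw [mem_Bv] at hxB
  obtain ⟨⟨hx1, hxn⟩, hst⟩ := hxB
  have hpm : 1 ≤ p ∧ p ≤ n := posv_mem σ hx1 hxn
  have hWp : W σ p = x := W_posv σ hx1 hxn
  unfold DAv DDv at hst
  rw [← hpdef] at hst
  by_cases hlt : W σ (p - 1) < x
  · -- double ascent case
    have hda : x < W σ (p + 1) := by
      rcases hst with h' | h'
      · exact h'.2
      · omega
    set T := sInf {s | p < s ∧ W σ s < x} with hTdef
    have hSne : {s | p < s ∧ W σ s < x}.Nonempty := by
      refine ⟨n + 1, ?_, ?_⟩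
      · omega
      · rw [W_out σ (by omega)]; omega
    have hTmem : p < T ∧ W σ T < x := Nat.sInf_mem hSne
    have hTle : T ≤ n + 1 := Nat.sInf_le (by
      refine ⟨by omega, ?_⟩
      rw [W_out σ (by omega)]; omega)
    have hmid : ∀ s, p < s → s < T → x < W σ s := by
      intro s hs1 hs2
      have hnot : s ∉ {s | p < s ∧ W σ s < x} := Nat.notMem_of_lt_sInf (hTdef ▸ hs2)
      have hge : x ≤ W σ s := by
        by_contra hc
        exact hnot ⟨hs1, by omega⟩
      rcases Nat.eq_or_lt_of_le hge with heq | hgt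
      · exfalso
        have : s = p := W_inj σ (by omega) (by omega) hpm.1 hpm.2 (by rw [← heq, hWp])
        omega
      · exact hgt
    have htp : p + 2 ≤ T := by
      rcases Nat.lt_or_ge T (p+2) with hc | hc
      · exfalso
        have : T = p + 1 := by omega
        rw [this] at hTmem
        omega
      · exact hc
    have C : Cfg σ x p T := ⟨hpm.1, hpm.2, hWp, hlt, hda, htp, hTle, hTmem.2, hmid⟩
    have hphi : phi σ = hop σ p T := by
      unfold phi
      rw [dif_pos h, ← hxdef, ← hpdef, ← hTdef, if_pos hlt]
    refine ⟨?_, ?_, ?_⟩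
    · exact hphi ▸ ⟨x, C.mem_Bv_hop_x⟩
    · rw [hphi]
      set τ := hop σ p T with hτdef
      have hneτ : (Bv τ).Nonempty := ⟨x, C.mem_Bv_hop_x⟩
      have hminτ : ∀ y ∈ Bv τ, x ≤ y := (C.min_transfer).mp hmin
      have hxτ : (Bv τ).min' hneτ = x :=
        le_antisymm (Finset.min'_le _ _ C.mem_Bv_hop_x) (Finset.le_min' _ _ _ hminτ)
      have hpτ : posv τ x = T - 1 := C.posv_hop_x
      have hdd := C.DDv_hop_x
      rw [← hτdef] at hdd
      unfold DDv at hdd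
      rw [hpτ] at hdd
      have hsup : sSup {s | s < T - 1 ∧ W τ s < x} = p - 1 := by
        have hmem : p - 1 ∈ {s | s < T - 1 ∧ W τ s < x} := by
          refine ⟨by omega, ?_⟩
          rw [hτdef, C.W_hop_out (by omega)]
          exact hlt
        have hub : ∀ s ∈ {s | s < T - 1 ∧ W τ s < x}, s ≤ p - 1 := by
          intro s hs
          obtain ⟨hs1, hs2⟩ := hs
          by_contra hc
          rw [hτdef, C.W_hop_mid (by omega) (by omega)] at hs2
          have := hmid (s+1) (by omega) (by omega)
          omega
        exact le_antisymm (csSup_le ⟨p - 1, hmem⟩ hub) (le_csSup ⟨p - 1, hub⟩ hmem)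
      unfold phi
      rw [dif_pos hneτ, hxτ, hpτ]
      rw [if_neg (show ¬ W τ (T - 1 - 1) < x from by omega), hsup,
        show p - 1 + 1 = p from by omega, show T - 1 + 1 = T from by omega, hτdef]
      exact unhop_hop σ p T
    · left
      rw [hphi]
      exact C.desSum_hop
  · -- double descent case
    have hdd : W σ (p + 1) < x ∧ x < W σ (p - 1) := by
      rcases hst with h' | h'
      · exact absurd h'.1 hlt
      · exact h'
    have hp2 : 2 ≤ p := by
      have : 1 ≤ W σ (p - 1) := by omega
      rw [W_pos_iff] at this
      omega
    set T' := sSup {s | s < p ∧ W σ s < x} with hT'def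
    have h0mem : (0 : ℕ) ∈ {s | s < p ∧ W σ s < x} := by
      refine ⟨by omega, ?_⟩
      rw [W_zero]
      omega
    have hub0 : ∀ s ∈ {s | s < p ∧ W σ s < x}, s ≤ p := fun s hs => le_of_lt hs.1
    have hT'mem : T' < p ∧ W σ T' < x := Nat.sSup_mem ⟨0, h0mem⟩ ⟨p, hub0⟩
    have hmax : ∀ s, T' < s → s < p → x < W σ s := by
      intro s hs1 hs2
      have hnot : s ∉ {s | s < p ∧ W σ s < x} := by
        intro hmem
        have := le_csSup (⟨p, hub0⟩ : BddAbove {s | s < p ∧ W σ s < x}) hmem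
        rw [← hT'def] at this
        omega
      have hge : x ≤ W σ s := by
        by_contra hc
        exact hnot ⟨hs2, by omega⟩
      rcases Nat.eq_or_lt_of_le hge with heq | hgt
      · exfalso
        have : s = p := W_inj σ (by omega) (by omega) hpm.1 hpm.2 (by rw [← heq, hWp])
        omega
      · exact hgt
    have hT'2 : T' + 2 ≤ p := by
      rcases Nat.lt_or_ge T' (p - 1) with hc | hc
      · omega
      · exfalso
        have : T' = p - 1 := by omega
        rw [this] at hT'mem
        omega
    set τ := unhop σ (T' + 1) (p + 1) with hτdef
    have ha : 1 ≤ T' + 1 := by omega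
    have hab : T' + 1 + 2 ≤ p + 1 := by omega
    have hbn : p + 1 ≤ n + 1 := by omega
    have Wout : ∀ z : ℕ, z < T' + 1 ∨ p < z → W τ z = W σ z := by
      intro z hz
      rw [hτdef, W_unhop_out σ ha hab (by omega)]
    have Wland : W τ (T' + 1) = x := by
      rw [hτdef, W_unhop_land σ ha hab hbn, show p + 1 - 1 = p from by omega, hWp]
    have Wmid : ∀ z : ℕ, T' + 2 ≤ z → z ≤ p → W τ z = W σ (z - 1) := by
      intro z h1 h2
      rw [hτdef, W_unhop_mid σ ha hab hbn (by omega) (by omega)]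
    have C' : Cfg τ x (T' + 1) (p + 1) := by
      refine ⟨by omega, by omega, Wland, ?_, ?_, by omega, hbn, ?_, ?_⟩
      · rw [show T' + 1 - 1 = T' from by omega, Wout T' (by omega)]
        exact hT'mem.2
      · rw [Wmid (T' + 1 + 1) (by omega) (by omega), show T' + 1 + 1 - 1 = T' + 1 from by omega]
        exact hmax (T' + 1) (by omega) (by omega)
      · rw [Wout (p + 1) (by omega)]
        exact hdd.1
      · intro s hs1 hs2
        rw [Wmid s (by omega) (by omega)]
        exact hmax (s - 1) (by omega) (by omega)
    have hhu : hop τ (T' + 1) (p + 1) = σ := hop_unhop σ _ _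
    have hphi : phi σ = τ := by
      unfold phi
      rw [dif_pos h, ← hxdef, ← hpdef, if_neg hlt, ← hT'def, ← hτdef]
    refine ⟨?_, ?_, ?_⟩
    · exact hphi ▸ ⟨x, C'.mem_Bv_x⟩
    · rw [hphi]
      have hneτ : (Bv τ).Nonempty := ⟨x, C'.mem_Bv_x⟩
      have hminτ : ∀ y ∈ Bv τ, x ≤ y := (C'.min_transfer).mpr (by rw [hhu]; exact hmin)
      have hxτ : (Bv τ).min' hneτ = x :=
        le_antisymm (Finset.min'_le _ _ C'.mem_Bv_x) (Finset.le_min' _ _ _ hminτ)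
      have hpτ : posv τ x = T' + 1 := C'.posv_x
      have hinf : sInf {s | T' + 1 < s ∧ W τ s < x} = p + 1 := by
        have hmem : p + 1 ∈ {s | T' + 1 < s ∧ W τ s < x} := ⟨by omega, by
          rw [Wout (p+1) (by omega)]; exact hdd.1⟩
        have h1 : sInf {s | T' + 1 < s ∧ W τ s < x} ≤ p + 1 := Nat.sInf_le hmem
        have h2 := Nat.sInf_mem (⟨p + 1, hmem⟩ :
          {s | T' + 1 < s ∧ W τ s < x}.Nonempty)
        set I := sInf {s | T' + 1 < s ∧ W τ s < x} with hIdef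
        obtain ⟨hI1, hI2⟩ := h2
        rcases Nat.lt_or_ge I (p+1) with hc | hc
        · exfalso
          rw [Wmid I (by omega) (by omega)] at hI2
          have := hmax (I - 1) (by omega) (by omega)
          omega
        · omega
      unfold phi
      rw [dif_pos hneτ, hxτ, hpτ]
      rw [if_pos (show W τ (T' + 1 - 1) < x from by
        rw [show T' + 1 - 1 = T' from by omega, Wout T' (by omega)]
        exact hT'mem.2), hinf]
      exact hhu
    · right
      rw [hphi]
      rw [← hhu]
      exact C'.desSum_hop

/-- every position is a peak or a valley when Bv is empty -/
lemma pv_of_Bv_empty {σ : Equiv.Perm (Fin n)} (hB : Bv σ = ∅) :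
    ∀ z, 1 ≤ z → z ≤ n →
      (W σ (z-1) < W σ z ∧ W σ (z+1) < W σ z) ∨ (W σ z < W σ (z-1) ∧ W σ z < W σ (z+1)) := by
  intro z hz1 hzn
  have hy := W_mem σ hz1 hzn
  have hpos : posv σ (W σ z) = z := posv_eq σ hz1 hzn rfl
  have hnB : W σ z ∉ Bv σ := by rw [hB]; exact Finset.notMem_empty _
  rw [mem_Bv] at hnB
  push_neg at hnB
  obtain ⟨hnda, hndd⟩ := hnB ⟨hy.1, hy.2⟩
  unfold DAv at hnda
  unfold DDv at hndd
  rw [hpos] at hnda hndd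
  have hleft : W σ (z-1) ≠ W σ z := by
    rcases Nat.eq_or_lt_of_le hz1 with h1 | h1
    · rw [show z - 1 = 0 from by omega, W_zero]
      omega
    · intro hc
      have := W_inj σ (by omega) (by omega) hz1 hzn hc
      omega
  have hright : W σ (z+1) ≠ W σ z := by
    rcases Nat.eq_or_lt_of_le hzn with h1 | h1
    · rw [show z + 1 = n + 1 from by omega, W_out σ (by omega)]
      omega
    · intro hc
      have := W_inj σ (by omega) (by omega) hz1 hzn hc
      omega
  omega

/-- the alternation pattern forced by an empty Bv -/
lemma alt_of_Bv_empty {σ : Equiv.Perm (Fin n)} (hB : Bv σ = ∅) :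
    ∀ z, 1 ≤ z → z ≤ n →
      (z % 2 = 1 → W σ (z+1) < W σ z) ∧ (z % 2 = 0 → W σ z < W σ (z+1)) := by
  intro z hz1
  induction z, hz1 using Nat.le_induction with
  | base =>
    intro hn
    have := pv_of_Bv_empty hB 1 (by omega) hn
    rw [show (1:ℕ) - 1 = 0 from rfl, W_zero] at this
    have := W_mem σ (le_refl 1) hn
    constructor
    · intro _
      omega
    · intro h
      omega
  | succ z hz ih =>
    intro hzn
    have hih := ih (by omega)
    have hpv := pv_of_Bv_empty hB (z+1) (by omega) hzn
    rw [show z + 1 - 1 = z from by omega] at hpv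
    rcases Nat.even_or_odd z with he | ho
    · have h0 : z % 2 = 0 := Nat.even_iff.mp he
      have := hih.2 h0
      constructor
      · intro _
        omega
      · intro h
        omega
    · have h1 : z % 2 = 1 := Nat.odd_iff.mp ho
      have := hih.1 h1
      constructor
      · intro h
        omega
      · intro _
        omega

lemma Bv_nonempty_of_even {σ : Equiv.Perm (Fin n)} (hn : 1 ≤ n) (he : n % 2 = 0) :
    (Bv σ).Nonempty := by
  rw [Finset.nonempty_iff_ne_empty]
  intro hB
  have := (alt_of_Bv_empty hB n hn (le_refl n)).2 he
  rw [W_out σ (z := n+1) (by omega)] at this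
  have := W_mem σ hn (le_refl n)
  omega

/-- down-up alternating permutation (in word form, 1-indexed) -/
def DownUp (σ : Equiv.Perm (Fin n)) : Prop :=
  ∀ z, 1 ≤ z → z < n →
    (z % 2 = 1 → W σ (z+1) < W σ z) ∧ (z % 2 = 0 → W σ z < W σ (z+1))

lemma Bv_empty_iff_downUp {σ : Equiv.Perm (Fin n)} (hodd : n % 2 = 1) :
    Bv σ = ∅ ↔ DownUp σ := by
  constructor
  · intro hB z hz1 hzn
    exact alt_of_Bv_empty hB z hz1 (by omega)
  · intro hd
    rw [Finset.eq_empty_iff_forall_notMem]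
    intro y hy
    rw [mem_Bv] at hy
    obtain ⟨⟨hy1, hyn⟩, hst⟩ := hy
    set z := posv σ y with hzdef
    have hzm : 1 ≤ z ∧ z ≤ n := posv_mem σ hy1 hyn
    have hWz : W σ z = y := W_posv σ hy1 hyn
    -- left comparison facts
    have hleft : (z % 2 = 1 → W σ (z-1) < y) ∧ (z % 2 = 0 → y < W σ (z-1)) := by
      rcases Nat.eq_or_lt_of_le hzm.1 with h1 | h1
      · rw [show z - 1 = 0 from by omega, W_zero]
        constructor
        · intro _; omega
        · intro h0; omega
      · have hz2 : 2 ≤ z := by omega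
        have := hd (z-1) (by omega) (by omega)
        rw [show z - 1 + 1 = z from by omega, hWz] at this
        constructor
        · intro h1'
          exact this.2 (by omega)
        · intro h0'
          exact this.1 (by omega)
    have hright : (z % 2 = 1 → W σ (z+1) < y) ∧ (z % 2 = 0 → y < W σ (z+1)) := by
      rcases Nat.eq_or_lt_of_le hzm.2 with h1 | h1
      · rw [show z + 1 = n + 1 from by omega, W_out σ (by omega)]
        constructor
        · intro _; omega
        · intro h0; omega
      · have := hd z (by omega) (by omega)
        rw [hWz] at this
        exact ⟨this.1, this.2⟩
    unfold DAv DDv at hst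
    rw [← hzdef] at hst
    rcases Nat.even_or_odd z with he | ho
    · have h0 : z % 2 = 0 := Nat.even_iff.mp he
      have l := hleft.2 h0
      have r := hright.2 h0
      rcases hst with h' | h' <;> omega
    · have h1 : z % 2 = 1 := Nat.odd_iff.mp ho
      have l := hleft.1 h1
      have r := hright.1 h1
      rcases hst with h' | h' <;> omega

lemma sum_odd_indicator : ∀ m : ℕ, (∑ z ∈ Ioc 0 m, if z % 2 = 1 then (1:ℕ) else 0) = (m+1)/2 := by
  intro m
  induction m with
  | zero => simp
  | succ m ih =>
    rw [Finset.sum_Ioc_succ_top (by omega), ih]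
    by_cases h : (m+1) % 2 = 1
    · rw [if_pos h]
      omega
    · rw [if_neg h]
      omega

lemma desSum_downUp {σ : Equiv.Perm (Fin n)} (hn : 1 ≤ n) (hodd : n % 2 = 1)
    (hd : DownUp σ) : desSum σ = (n+1)/2 := by
  rw [desSum, ← sum_odd_indicator n]
  apply Finset.sum_congr rfl
  intro z hz
  rw [Finset.mem_Ioc] at hz
  unfold dterm
  rcases Nat.eq_or_lt_of_le hz.2 with h1 | h1
  · have hzn : z = n := h1
    rw [hzn, W_out σ (z := n+1) (by omega)]
    have := W_mem σ hn (le_refl n)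
    rw [if_pos (by omega), if_pos (by omega)]
  · have := hd z (by omega) (by omega)
    rcases Nat.even_or_odd z with he | ho
    · have h0 : z % 2 = 0 := Nat.even_iff.mp he
      have := this.2 h0
      rw [if_neg (by omega), if_neg (by omega)]
    · have h1' : z % 2 = 1 := Nat.odd_iff.mp ho
      have := this.1 h1'
      rw [if_pos (by omega), if_pos (by omega)]

lemma desSum_le (σ : Equiv.Perm (Fin n)) : desSum σ ≤ n := by
  have : desSum σ ≤ ∑ _z ∈ Ioc 0 n, 1 := by
    apply Finset.sum_le_sum
    intro z _
    unfold dterm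
    split_ifs <;> omega
  simpa using this

lemma W_succ_lt_iff (σ : Equiv.Perm (Fin n)) {z : ℕ} (h : z + 1 < n) :
    W σ (z+2) < W σ (z+1) ↔ σ ⟨z+1, h⟩ < σ ⟨z, Nat.lt_of_succ_lt h⟩ := by
  rw [W_eq σ (z := z+2) (by omega) (by omega), W_eq σ (z := z+1) (by omega) (by omega)]
  have e1 : (⟨z+2-1, by omega⟩ : Fin n) = ⟨z+1, h⟩ := Fin.ext (by simp only [Fin.val_mk]; omega)
  have e2 : (⟨z+1-1, by omega⟩ : Fin n) = ⟨z, Nat.lt_of_succ_lt h⟩ := Fin.ext (by simp only [Fin.val_mk]; omega)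
  rw [e1, e2, Fin.lt_def]
  omega

lemma W_succ_gt_iff (σ : Equiv.Perm (Fin n)) {z : ℕ} (h : z + 1 < n) :
    W σ (z+1) < W σ (z+2) ↔ σ ⟨z, Nat.lt_of_succ_lt h⟩ < σ ⟨z+1, h⟩ := by
  rw [W_eq σ (z := z+2) (by omega) (by omega), W_eq σ (z := z+1) (by omega) (by omega)]
  have e1 : (⟨z+2-1, by omega⟩ : Fin n) = ⟨z+1, h⟩ := Fin.ext (by simp only [Fin.val_mk]; omega)
  have e2 : (⟨z+1-1, by omega⟩ : Fin n) = ⟨z, Nat.lt_of_succ_lt h⟩ := Fin.ext (by simp only [Fin.val_mk]; omega)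
  rw [e1, e2, Fin.lt_def]
  omega

lemma desSum_eq_descentCount (hn : 1 ≤ n) (σ : Equiv.Perm (Fin n)) :
    desSum σ = descentCount σ + 1 := by
  classical
  obtain ⟨m, rfl⟩ : ∃ m, n = m + 1 := ⟨n-1, by omega⟩
  have h1 : descentCount σ = ((Ioc 0 m).filter (fun w => W σ (w+1) < W σ w)).card := by
    rw [descentCount, ← Nat.card_eq_finsetCard]
    apply Nat.card_congr
    refine ⟨fun a => ⟨a.1 + 1, ?_⟩, fun b => ⟨b.1 - 1, ?_⟩, ?_, ?_⟩
    · obtain ⟨hlt, hσ⟩ := a.2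
      rw [Finset.mem_filter, Finset.mem_Ioc]
      refine ⟨⟨by omega, by omega⟩, ?_⟩
      exact (W_succ_lt_iff σ hlt).mpr hσ
    · have hb := b.2
      rw [Finset.mem_filter, Finset.mem_Ioc] at hb
      have hlt : b.1 - 1 + 1 < m + 1 := by omega
      refine ⟨hlt, ?_⟩
      have : W σ (b.1 - 1 + 2) < W σ (b.1 - 1 + 1) := by
        rw [show b.1 - 1 + 2 = b.1 + 1 from by omega, show b.1 - 1 + 1 = b.1 from by omega]
        exact hb.2
      exact (W_succ_lt_iff σ hlt).mp this
    · intro a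
      exact Subtype.ext (by simp)
    · intro b
      have hb := b.2
      rw [Finset.mem_filter, Finset.mem_Ioc] at hb
      exact Subtype.ext (by simp only; omega)
  have h2 : desSum σ = (∑ z ∈ Ioc 0 m, dterm σ z) + dterm σ (m+1) := by
    rw [desSum, Finset.sum_Ioc_succ_top (by omega)]
  have h3 : dterm σ (m+1) = 1 := by
    unfold dterm
    rw [W_out σ (z := m+2) (by omega)]
    have := W_mem σ (z := m+1) (by omega) (by omega)
    rw [if_pos (by omega)]
  have h4 : (∑ z ∈ Ioc 0 m, dterm σ z)
      = ((Ioc 0 m).filter (fun w => W σ (w+1) < W σ w)).card := by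
    rw [Finset.card_filter]
    exact Finset.sum_congr rfl (fun z _ => rfl)
  rw [h2, h3, h4, h1]

/-- the zigzag predicate from the statement -/
def Zig (σ : Equiv.Perm (Fin n)) : Prop :=
  ∀ z : ℕ, ∀ h : z + 1 < n,
    if z % 2 = 0 then σ ⟨z, Nat.lt_of_succ_lt h⟩ < σ ⟨z + 1, h⟩
    else σ ⟨z + 1, h⟩ < σ ⟨z, Nat.lt_of_succ_lt h⟩

lemma downUp_iff_revZig {σ : Equiv.Perm (Fin n)} :
    DownUp σ ↔ (∀ z : ℕ, ∀ h : z + 1 < n,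
      if z % 2 = 0 then σ ⟨z + 1, h⟩ < σ ⟨z, Nat.lt_of_succ_lt h⟩
      else σ ⟨z, Nat.lt_of_succ_lt h⟩ < σ ⟨z + 1, h⟩) := by
  constructor
  · intro hd z h
    have hz := hd (z+1) (by omega) (by omega)
    by_cases hp : z % 2 = 0
    · rw [if_pos hp]
      exact (W_succ_lt_iff σ h).mp (hz.1 (by omega))
    · rw [if_neg hp]
      exact (W_succ_gt_iff σ h).mp (hz.2 (by omega))
  · intro hz w hw1 hwn
    have h : (w - 1) + 1 < n := by omega
    have := hz (w-1) h
    constructor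
    · intro hp
      have hp' : (w - 1) % 2 = 0 := by omega
      rw [if_pos hp'] at this
      have := (W_succ_lt_iff σ h).mpr this
      rw [show w - 1 + 2 = w + 1 from by omega, show w - 1 + 1 = w from by omega] at this
      exact this
    · intro hp
      have hp' : ¬ (w - 1) % 2 = 0 := by omega
      rw [if_neg hp'] at this
      have := (W_succ_gt_iff σ h).mpr this
      rw [show w - 1 + 2 = w + 1 from by omega, show w - 1 + 1 = w from by omega] at this
      exact this

lemma zig_trans_rev {σ : Equiv.Perm (Fin n)} :
    Zig (σ.trans Fin.revPerm) ↔ (∀ z : ℕ, ∀ h : z + 1 < n,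
      if z % 2 = 0 then σ ⟨z + 1, h⟩ < σ ⟨z, Nat.lt_of_succ_lt h⟩
      else σ ⟨z, Nat.lt_of_succ_lt h⟩ < σ ⟨z + 1, h⟩) := by
  unfold Zig
  apply forall_congr'
  intro z
  apply forall_congr'
  intro h
  by_cases hp : z % 2 = 0
  · rw [if_pos hp, if_pos hp]
    simp only [Equiv.trans_apply, Fin.revPerm_apply]
    exact Fin.rev_lt_rev
  · rw [if_neg hp, if_neg hp]
    simp only [Equiv.trans_apply, Fin.revPerm_apply]
    exact Fin.rev_lt_rev

open scoped Classical in
lemma card_downUp_eq_zigzag :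
    (((univ : Finset (Equiv.Perm (Fin n))).filter (fun σ => DownUp σ))).card = zigzagNum n := by
  classical
  have h1 : zigzagNum n
      = ((univ : Finset (Equiv.Perm (Fin n))).filter (fun σ => Zig σ)).card := by
    rw [zigzagNum, Nat.card_eq_fintype_card]
    exact Fintype.card_subtype _
  rw [h1]
  apply Finset.card_nbij' (i := fun σ => σ.trans Fin.revPerm) (j := fun σ => σ.trans Fin.revPerm)
  · intro σ hσ
    rw [Finset.mem_coe, Finset.mem_filter] at hσ ⊢
    exact ⟨Finset.mem_univ _, zig_trans_rev.mpr (downUp_iff_revZig.mp hσ.2)⟩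
  · intro σ hσ
    rw [Finset.mem_coe, Finset.mem_filter] at hσ ⊢
    refine ⟨Finset.mem_univ _, ?_⟩
    apply downUp_iff_revZig.mpr
    apply zig_trans_rev.mp
    have he : (σ.trans Fin.revPerm).trans Fin.revPerm = σ := by
      ext i
      simp [Fin.rev_rev]
    rw [he]
    exact hσ.2
  · intro σ _
    ext i
    simp [Fin.rev_rev]
  · intro σ _
    ext i
    simp [Fin.rev_rev]

end Stmt15

/-- `Σ_{ℓ=0}^{k−1} (−1)^ℓ · ⟨k, ℓ⟩` equals `0` for even `k` and
`(−1)^((k−1)/2) · E_k` for odd `k`. -/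
theorem stmt15 (k : ℕ) (hk : 1 ≤ k) :
    ∑ ℓ ∈ Finset.range k, (-1 : ℤ) ^ ℓ * (eulerianNum k ℓ : ℤ) =
    if Even k then 0 else (-1 : ℤ) ^ ((k - 1) / 2) * (zigzagNum k : ℤ) := by
  classical
  open Stmt15 Finset in
  have hE : ∀ ℓ : ℕ, (eulerianNum k ℓ : ℤ)
      = (((univ : Finset (Equiv.Perm (Fin k))).filter (fun σ => descentCount σ = ℓ)).card : ℤ) := by
    intro ℓ
    rw [eulerianNum, Nat.card_eq_fintype_card, Fintype.card_subtype]
  have hmaps : ∀ σ : Equiv.Perm (Fin k), σ ∈ (univ : Finset (Equiv.Perm (Fin k))) →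
      descentCount σ ∈ range k := by
    intro σ _
    rw [mem_range]
    have h1 := desSum_eq_descentCount hk σ
    have h2 := desSum_le σ
    omega
  have hstep1 : ∑ ℓ ∈ Finset.range k, (-1 : ℤ) ^ ℓ * (eulerianNum k ℓ : ℤ)
      = ∑ σ : Equiv.Perm (Fin k), (-1:ℤ)^(descentCount σ) := by
    rw [← Finset.sum_fiberwise_of_maps_to hmaps (fun σ => (-1:ℤ)^(descentCount σ))]
    apply Finset.sum_congr rfl
    intro ℓ _
    rw [hE ℓ]
    rw [Finset.sum_congr rfl (g := fun _ => (-1:ℤ)^ℓ)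
      (fun σ hσ => by rw [(Finset.mem_filter.mp hσ).2])]
    rw [Finset.sum_const, nsmul_eq_mul]
    ring
  have hstep2 : ∑ σ : Equiv.Perm (Fin k), (-1:ℤ)^(descentCount σ)
      = - ∑ σ : Equiv.Perm (Fin k), (-1:ℤ)^(desSum σ) := by
    have hpt : ∀ σ : Equiv.Perm (Fin k), (-1:ℤ)^(descentCount σ) = -((-1:ℤ)^(desSum σ)) := by
      intro σ
      rw [desSum_eq_descentCount hk σ, pow_succ]
      ring
    rw [Finset.sum_congr rfl (fun σ _ => hpt σ), Finset.sum_neg_distrib]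
  have hsplit := Finset.sum_filter_add_sum_filter_not (univ : Finset (Equiv.Perm (Fin k)))
    (fun σ => Bv σ = ∅) (fun σ => (-1:ℤ)^(desSum σ))
  have hzero : ∑ σ ∈ ((univ : Finset (Equiv.Perm (Fin k))).filter (fun σ => ¬ Bv σ = ∅)),
      (-1:ℤ)^(desSum σ) = 0 := by
    apply Finset.sum_involution (g := fun σ _ => phi σ)
    · intro σ hσ
      rw [Finset.mem_filter] at hσ
      have hne : (Bv σ).Nonempty := Finset.nonempty_iff_ne_empty.mpr hσ.2
      obtain ⟨_, _, hd⟩ := phi_spec hne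
      rcases hd with h | h
      · rw [h, pow_succ]; ring
      · rw [h, pow_succ]; ring
    · intro σ hσ _
      rw [Finset.mem_filter] at hσ
      have hne : (Bv σ).Nonempty := Finset.nonempty_iff_ne_empty.mpr hσ.2
      obtain ⟨_, _, hd⟩ := phi_spec hne
      intro hc
      rw [hc] at hd
      omega
    · intro σ hσ
      rw [Finset.mem_filter] at hσ ⊢
      have hne : (Bv σ).Nonempty := Finset.nonempty_iff_ne_empty.mpr hσ.2
      obtain ⟨h1, _, _⟩ := phi_spec hne
      exact ⟨Finset.mem_univ _, Finset.nonempty_iff_ne_empty.mp h1⟩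
    · intro σ hσ
      rw [Finset.mem_filter] at hσ
      have hne : (Bv σ).Nonempty := Finset.nonempty_iff_ne_empty.mpr hσ.2
      exact (phi_spec hne).2.1
  rw [hstep1, hstep2, ← hsplit, hzero, add_zero]
  by_cases hpar : k % 2 = 0
  · rw [if_pos (Nat.even_iff.mpr hpar)]
    have hempty : ((univ : Finset (Equiv.Perm (Fin k))).filter (fun σ => Bv σ = ∅)) = ∅ := by
      rw [Finset.filter_eq_empty_iff]
      intro σ _
      exact Finset.nonempty_iff_ne_empty.mp (Bv_nonempty_of_even (σ := σ) hk hpar)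
    rw [hempty, Finset.sum_empty]
    ring
  · have hodd : k % 2 = 1 := by omega
    rw [if_neg (by rw [Nat.even_iff]; omega)]
    have hconst : ∀ σ ∈ ((univ : Finset (Equiv.Perm (Fin k))).filter (fun σ => Bv σ = ∅)),
        (-1:ℤ)^(desSum σ) = (-1:ℤ)^((k+1)/2) := by
      intro σ hσ
      rw [Finset.mem_filter] at hσ
      rw [desSum_downUp hk hodd ((Bv_empty_iff_downUp hodd).mp hσ.2)]
    have hfc : ((univ : Finset (Equiv.Perm (Fin k))).filter (fun σ => Bv σ = ∅))
        = (univ : Finset (Equiv.Perm (Fin k))).filter (fun σ => DownUp σ) :=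
      Finset.filter_congr (fun σ _ => Bv_empty_iff_downUp hodd)
    rw [Finset.sum_congr rfl hconst, Finset.sum_const, hfc, card_downUp_eq_zigzag,
      nsmul_eq_mul]
    rw [show (k+1)/2 = (k-1)/2 + 1 from by omega, pow_succ]
    ring
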